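/- Let A be an abelian category, and suppose ξ₁ : 0 → K₁ → X₁ → Y → 0 is a universal L-extension of Y by K for a finitely generated Γ(K)-submodule L ⊆ Ext¹(Y, K). Then a short exact sequence ξ₂ : 0 → K₂ → X₂ → Y → 0 is a universal L-extension if and only if there exists an isomorphism u : K₁ → K₂ with [ξ₂] = [u.ξ₁]. -/

import Mathlib

set_option linter.unusedSectionVars false

open CategoryTheory Abelian Limits

universe w v u

attribute [local instance] CategoryTheory.Abelian.hasFiniteBiproducts

variable {A : Type u} [Category.{v} A] [Abelian A]

/-- `M` belongs to `add K`: it is a direct summand of a finite direct sum of copies of `K`. -/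
def InAdd (K M : A) : Prop :=
  ∃ (n : ℕ) (s : M ⟶ ⨁ (fun _ : Fin n => K)) (r : (⨁ fun _ : Fin n => K) ⟶ M),
    s ≫ r = 𝟙 M

/-- `α` factors through `α'`. -/
def Factors {X X' Y : A} (α : X ⟶ Y) (α' : X' ⟶ Y) : Prop :=
  ∃ v : X ⟶ X', v ≫ α' = α

/-- `α` and `α'` are right equivalent. -/
def RightEquiv {X X' Y : A} (α : X ⟶ Y) (α' : X' ⟶ Y) : Prop :=
  Factors α α' ∧ Factors α' α

/-- A morphism is right minimal. -/
def RightMinimal {X Y : A} (α : X ⟶ Y) : Prop :=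
  ∀ v : X ⟶ X, v ≫ α = α → IsIso v

/-- A short exact sequence `0 → K → X → Y → 0`. -/
structure SES (K Y : A) where
  X : A
  i : K ⟶ X
  p : X ⟶ Y
  zero : i ≫ p = 0
  shortExact : (ShortComplex.mk i p zero).ShortExact

variable [HasExt.{w} A]

lemma Ext.mk₀_add' {X Y : A} (f g : X ⟶ Y) :
    Ext.mk₀ (f + g) = Ext.mk₀ f + Ext.mk₀ g := by
  letI := HasDerivedCategory.standard A
  apply Ext.ext
  simp [Ext.add_hom, ShiftedHom.mk₀, Functor.map_add]

/-- The class `[ξ] ∈ Ext¹(Y, K)` of a short exact sequence `ξ`. -/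
noncomputable def SES.cls {K Y : A} (E : SES K Y) : Ext Y K 1 :=
  E.shortExact.extClass

/-- The class `[u.ξ]` of the pushout of `ξ` along `u`. -/
noncomputable def SES.push {K Y Z : A} (E : SES K Y) (u : K ⟶ Z) : Ext Y Z 1 :=
  E.cls.comp (Ext.mk₀ u) (add_zero 1)

noncomputable instance extSMulEnd (Y K : A) : SMul (End K) (Ext Y K 1) :=
  ⟨fun g e => e.comp (Ext.mk₀ g) (add_zero 1)⟩

lemma extSmul_def {Y K : A} (g : End K) (e : Ext Y K 1) :
    g • e = e.comp (Ext.mk₀ g) (add_zero 1) := rfl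

/-- `Ext¹(Y, K)` as a left module over `Γ(K) = End K`, via pushout. -/
noncomputable instance extModuleEnd (Y K : A) : Module (End K) (Ext Y K 1) where
  one_smul e := by rw [extSmul_def]; exact Ext.comp_mk₀_id e
  mul_smul g h e := by
    rw [extSmul_def, extSmul_def, extSmul_def,
      Ext.comp_assoc_of_third_deg_zero, Ext.mk₀_comp_mk₀]
    rfl
  smul_add g e f := by
    rw [extSmul_def, extSmul_def, extSmul_def]; exact Ext.add_comp e f _ _
  add_smul g h e := by
    rw [extSmul_def, extSmul_def, extSmul_def, Ext.mk₀_add', Ext.comp_add]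
  zero_smul e := by rw [extSmul_def]; rw [Ext.mk₀_zero, Ext.comp_zero]
  smul_zero g := by rw [extSmul_def]; exact Ext.zero_comp _ _ _ _ _

/-- The connecting map `c(ξ, K) : Hom(K₁, K) → Ext¹(Y, K)`, `u ↦ [u.ξ]`,
as a morphism of left `Γ(K) = End K`-modules. -/
noncomputable def SES.conn {K₁ Y : A} (E : SES K₁ Y) (K : A) :
    (K₁ ⟶ K) →ₗ[End K] Ext Y K 1 where
  toFun u := E.push u
  map_add' u v := by
    dsimp [SES.push]
    rw [Ext.mk₀_add', Ext.comp_add]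
  map_smul' g u := by
    dsimp [SES.push]
    rw [End.smul_right, extSmul_def, Ext.comp_assoc_of_third_deg_zero,
      Ext.mk₀_comp_mk₀]

/-- Right minimality for a morphism of modules. -/
def ModRightMinimal {R : Type*} [Ring R] {M N : Type*} [AddCommGroup M] [AddCommGroup N]
    [Module R M] [Module R N] (c : M →ₗ[R] N) : Prop :=
  ∀ g : M →ₗ[R] M, c.comp g = c → Function.Bijective g

universe w'

/-- The `R`-module `M` admits a projective cover. -/
def HasProjCover (R : Type*) [Ring R] (M : Type w') [AddCommGroup M] [Module R M] : Prop :=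
  ∃ (P : Type w') (_ : AddCommGroup P) (_ : Module R P) (f : P →ₗ[R] M),
    Module.Projective R P ∧ Function.Surjective f ∧ ModRightMinimal f

/-- `ξ` is a universal `L`-extension of `Y` by `K`. -/
def IsUniversalExt (K : A) {K₁ Y : A} (E : SES K₁ Y) (L : Submodule (End K) (Ext Y K 1)) :
    Prop :=
  InAdd K K₁ ∧ LinearMap.range (E.conn K) = L ∧ ModRightMinimal (E.conn K)

lemma InAdd.self (K : A) : InAdd K K := by
  refine ⟨1, biproduct.ι (fun _ : Fin 1 => K) (0 : Fin 1), biproduct.π (fun _ : Fin 1 => K) 0, ?_⟩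
  simp


section Aux

lemma Ext.mk₀_sum' {X Y : A} {ι : Type*} (t : Finset ι) (f : ι → (X ⟶ Y)) :
    Ext.mk₀ (∑ i ∈ t, f i) = ∑ i ∈ t, Ext.mk₀ (f i) := by
  classical
  induction t using Finset.induction with
  | empty => simpa using Ext.mk₀_zero
  | insert _ _ h ih => rw [Finset.sum_insert h, Finset.sum_insert h, Ext.mk₀_add', ih]

lemma Ext.comp_sum' {X Y Z : A} (e : Ext X Y 1) {ι : Type*} (t : Finset ι)
    (f : ι → Ext Y Z 0) :
    e.comp (∑ i ∈ t, f i) (add_zero 1) = ∑ i ∈ t, e.comp (f i) (add_zero 1) := by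
  classical
  induction t using Finset.induction with
  | empty => simpa using Ext.comp_zero e Z 0 1 (add_zero 1)
  | insert _ _ h ih => rw [Finset.sum_insert h, Finset.sum_insert h, Ext.comp_add, ih]

/-- Regard an endomorphism as an element of the monoid `End K`. -/
def toEnd {K : A} (f : K ⟶ K) : End K := f

lemma toEnd_smul_def {K M : A} (f : K ⟶ K) (g : M ⟶ K) : toEnd f • g = g ≫ f := rfl

/-- In `add K`, elements of `Ext¹(Y, M)` are detected by pushing forward along all `M ⟶ K`. -/
lemma ext_of_inAdd {K M Y : A} (h : InAdd K M) {e₁ e₂ : Ext Y M 1}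
    (hv : ∀ v : M ⟶ K, e₁.comp (Ext.mk₀ v) (add_zero 1) = e₂.comp (Ext.mk₀ v) (add_zero 1)) :
    e₁ = e₂ := by
  obtain ⟨n, s, r, hsr⟩ := h
  have htot : (𝟙 M : M ⟶ M) = ∑ j : Fin n,
      (s ≫ biproduct.π (fun _ : Fin n => K) j) ≫ (biproduct.ι (fun _ : Fin n => K) j ≫ r) := by
    calc (𝟙 M : M ⟶ M) = s ≫ (∑ j : Fin n, biproduct.π (fun _ : Fin n => K) j ≫
          biproduct.ι (fun _ : Fin n => K) j) ≫ r := by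
          rw [biproduct.total, Category.id_comp, hsr]
      _ = _ := by
          rw [Preadditive.sum_comp, Preadditive.comp_sum]
          exact Finset.sum_congr rfl fun j _ => by simp only [Category.assoc]
  have key : ∀ e : Ext Y M 1, e = ∑ j : Fin n,
      (e.comp (Ext.mk₀ (s ≫ biproduct.π (fun _ : Fin n => K) j)) (add_zero 1)).comp
        (Ext.mk₀ (biproduct.ι (fun _ : Fin n => K) j ≫ r)) (add_zero 1) := by
    intro e
    conv_lhs => rw [← Ext.comp_mk₀_id e, htot]
    rw [Ext.mk₀_sum', Ext.comp_sum']
    exact Finset.sum_congr rfl fun j _ => by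
      rw [← Ext.mk₀_comp_mk₀, ← Ext.comp_assoc_of_third_deg_zero]
  rw [key e₁, key e₂]
  exact Finset.sum_congr rfl fun j _ => by rw [hv]

/-- Lifting lemma: if the range of `c₂` is contained in that of `c₁`, then `c₂` factors
through `c₁` via precomposition with a morphism `u`. -/
lemma exists_precomp_lift {K K₁ K₂ : A} {N : Type*} [AddCommGroup N] [Module (End K) N]
    (c₁ : (K₁ ⟶ K) →ₗ[End K] N) (c₂ : (K₂ ⟶ K) →ₗ[End K] N)
    (h : InAdd K K₂) (hle : ∀ v, c₂ v ∈ LinearMap.range c₁) :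
    ∃ u : K₁ ⟶ K₂, ∀ v : K₂ ⟶ K, c₁ (u ≫ v) = c₂ v := by
  obtain ⟨n, s, r, hsr⟩ := h
  choose w hw using fun j : Fin n => hle (s ≫ biproduct.π (fun _ : Fin n => K) j)
  refine ⟨∑ j : Fin n, w j ≫ biproduct.ι (fun _ : Fin n => K) j ≫ r, fun v => ?_⟩
  have e1 : (∑ j : Fin n, w j ≫ biproduct.ι (fun _ : Fin n => K) j ≫ r) ≫ v
      = ∑ j : Fin n, (toEnd (biproduct.ι (fun _ : Fin n => K) j ≫ r ≫ v) • w j) := by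
    rw [Preadditive.sum_comp]
    exact Finset.sum_congr rfl fun j _ => by
      rw [toEnd_smul_def]; simp only [Category.assoc]
  have e2 : ∑ j : Fin n, (toEnd (biproduct.ι (fun _ : Fin n => K) j ≫ r ≫ v) •
      (s ≫ biproduct.π (fun _ : Fin n => K) j)) = v := by
    have step : ∀ j : Fin n, (toEnd (biproduct.ι (fun _ : Fin n => K) j ≫ r ≫ v) •
        (s ≫ biproduct.π (fun _ : Fin n => K) j))
        = s ≫ ((biproduct.π (fun _ : Fin n => K) j ≫ biproduct.ι (fun _ : Fin n => K) j) ≫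
          (r ≫ v)) := by
      intro j; rw [toEnd_smul_def]; simp only [Category.assoc]
    rw [Finset.sum_congr rfl fun j _ => step j, ← Preadditive.comp_sum, ← Preadditive.sum_comp,
      biproduct.total, Category.id_comp, ← Category.assoc, hsr, Category.id_comp]
  rw [e1, map_sum]
  calc ∑ j : Fin n, c₁ (toEnd (biproduct.ι (fun _ : Fin n => K) j ≫ r ≫ v) • w j)
      = ∑ j : Fin n, c₂ (toEnd (biproduct.ι (fun _ : Fin n => K) j ≫ r ≫ v) •
          (s ≫ biproduct.π (fun _ : Fin n => K) j)) :=
        Finset.sum_congr rfl fun j _ => by rw [map_smul, hw, ← map_smul]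
    _ = c₂ v := by rw [← map_sum, e2]

/-- Precomposition with `u` as a map of `End K`-modules. -/
def precompₗ (K : A) {K₁ K₂ : A} (u : K₁ ⟶ K₂) : (K₂ ⟶ K) →ₗ[End K] (K₁ ⟶ K) where
  toFun v := u ≫ v
  map_add' v v' := by simp
  map_smul' g v := by rw [End.smul_right, RingHom.id_apply, End.smul_right, Category.assoc]

@[simp] lemma precompₗ_apply (K : A) {K₁ K₂ : A} (u : K₁ ⟶ K₂) (v : K₂ ⟶ K) :
    precompₗ K u v = u ≫ v := rfl

/-- If precomposition `Hom(u, K)` is bijective and `K₁, K₂ ∈ add K`, then `u` is an iso. -/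
lemma isIso_of_precomp_bijective {K K₁ K₂ : A} (h₁ : InAdd K K₁) (h₂ : InAdd K K₂)
    (u : K₁ ⟶ K₂) (hb : Function.Bijective fun v : K₂ ⟶ K => u ≫ v) : IsIso u := by
  have hM : ∀ M : A, InAdd K M → Function.Bijective fun v : K₂ ⟶ M => u ≫ v := by
    rintro M ⟨n, s, r, hsr⟩
    have hbp : Function.Bijective fun v : K₂ ⟶ ⨁ (fun _ : Fin n => K) => u ≫ v := by
      constructor
      · intro v v' hv
        have hv' : u ≫ v = u ≫ v' := hv
        apply biproduct.hom_ext
        intro j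
        apply hb.1
        show u ≫ v ≫ biproduct.π _ j = u ≫ v' ≫ biproduct.π _ j
        rw [← Category.assoc, ← Category.assoc, hv']
      · intro w
        choose t ht using fun j : Fin n => hb.2 (w ≫ biproduct.π (fun _ : Fin n => K) j)
        refine ⟨biproduct.lift t, biproduct.hom_ext _ _ fun j => ?_⟩
        show (u ≫ biproduct.lift t) ≫ biproduct.π _ j = w ≫ biproduct.π _ j
        rw [Category.assoc, biproduct.lift_π]
        exact ht j
    constructor
    · intro v v' hv
      have hv' : u ≫ v = u ≫ v' := hv
      have h' : u ≫ (v ≫ s) = u ≫ (v' ≫ s) := by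
        rw [← Category.assoc, ← Category.assoc, hv']
      have h'' : v ≫ s = v' ≫ s := hbp.1 h'
      calc v = (v ≫ s) ≫ r := by rw [Category.assoc, hsr, Category.comp_id]
        _ = (v' ≫ s) ≫ r := by rw [h'']
        _ = v' := by rw [Category.assoc, hsr, Category.comp_id]
    · intro w
      obtain ⟨t, ht⟩ := hbp.2 (w ≫ s)
      have ht' : u ≫ t = w ≫ s := ht
      refine ⟨t ≫ r, ?_⟩
      show u ≫ t ≫ r = w
      rw [← Category.assoc, ht', Category.assoc, hsr, Category.comp_id]
  obtain ⟨w, hw₀⟩ := (hM K₁ h₁).2 (𝟙 K₁)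
  have hw : u ≫ w = 𝟙 K₁ := hw₀
  have hwu : w ≫ u = 𝟙 K₂ := by
    apply (hM K₂ h₂).1
    show u ≫ w ≫ u = u ≫ 𝟙 K₂
    rw [← Category.assoc, hw, Category.id_comp, Category.comp_id]
  exact ⟨⟨w, hw, hwu⟩⟩

lemma SES.conn_apply {K₁ Y : A} (E : SES K₁ Y) {K : A} (v : K₁ ⟶ K) :
    E.conn K v = E.cls.comp (Ext.mk₀ v) (add_zero 1) := rfl

lemma push_comp_mk₀ {K K₁ K₂ Y : A} (E : SES K₁ Y) (u : K₁ ⟶ K₂) (v : K₂ ⟶ K) :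
    (E.push u).comp (Ext.mk₀ v) (add_zero 1) = E.conn K (u ≫ v) := by
  rw [SES.conn_apply]
  dsimp [SES.push]
  rw [Ext.comp_assoc_of_third_deg_zero, Ext.mk₀_comp_mk₀]

end Aux

/-- if `ξ₁` is a universal `L`-extension, then `ξ₂` is a universal
`L`-extension iff there is an isomorphism `u : K₁ ⟶ K₂` with `[ξ₂] = [u.ξ₁]`. -/
theorem stmt12 {K K₁ K₂ Y : A} (L : Submodule (End K) (Ext Y K 1)) (hL : L.FG)
    (E₁ : SES K₁ Y) (h₁ : IsUniversalExt K E₁ L) (E₂ : SES K₂ Y) :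
    IsUniversalExt K E₂ L ↔ ∃ u : K₁ ⟶ K₂, IsIso u ∧ E₂.cls = E₁.push u := by
  obtain ⟨hadd₁, hrange₁, hmin₁⟩ := h₁
  constructor
  · rintro ⟨hadd₂, hrange₂, hmin₂⟩
    obtain ⟨u, hu⟩ := exists_precomp_lift (E₁.conn K) (E₂.conn K) hadd₂
      (fun v => by rw [hrange₁, ← hrange₂]; exact ⟨v, rfl⟩)
    obtain ⟨u', hu'⟩ := exists_precomp_lift (E₂.conn K) (E₁.conn K) hadd₁
      (fun v => by rw [hrange₂, ← hrange₁]; exact ⟨v, rfl⟩)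
    have h1 : Function.Bijective (precompₗ K (u ≫ u')) := by
      apply hmin₁
      refine LinearMap.ext fun w => ?_
      show E₁.conn K ((u ≫ u') ≫ w) = E₁.conn K w
      rw [Category.assoc, hu, hu']
    have h2 : Function.Bijective (precompₗ K (u' ≫ u)) := by
      apply hmin₂
      refine LinearMap.ext fun w => ?_
      show E₂.conn K ((u' ≫ u) ≫ w) = E₂.conn K w
      rw [Category.assoc, hu', hu]
    have hφ : Function.Bijective fun v : K₂ ⟶ K => u ≫ v := by
      constructor
      · intro v v' hv
        have hv' : u ≫ v = u ≫ v' := hv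
        have : precompₗ K (u' ≫ u) v = precompₗ K (u' ≫ u) v' := by
          simp only [precompₗ_apply, Category.assoc, hv']
        exact h2.1 this
      · intro w
        obtain ⟨t, ht⟩ := h1.2 w
        refine ⟨u' ≫ t, ?_⟩
        show u ≫ u' ≫ t = w
        rw [← Category.assoc]
        exact ht
    refine ⟨u, isIso_of_precomp_bijective hadd₁ hadd₂ u hφ, ?_⟩
    refine ext_of_inAdd hadd₂ fun v => ?_
    rw [push_comp_mk₀]
    exact (hu v).symm
  · rintro ⟨u, hiso, hcls⟩
    have hconn : ∀ v : K₂ ⟶ K, E₂.conn K v = E₁.conn K (u ≫ v) := fun v => by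
      rw [SES.conn_apply, hcls, push_comp_mk₀]
    have hadd₂ : InAdd K K₂ := by
      obtain ⟨n, s, r, hsr⟩ := hadd₁
      refine ⟨n, inv u ≫ s, r ≫ u, ?_⟩
      rw [Category.assoc, ← Category.assoc s r, hsr, Category.id_comp, IsIso.inv_hom_id]
    have hφ : Function.Bijective (precompₗ K u) := by
      constructor
      · intro v v' hv
        have hv' : u ≫ v = u ≫ v' := hv
        calc v = inv u ≫ u ≫ v := by rw [IsIso.inv_hom_id_assoc]
          _ = inv u ≫ u ≫ v' := by rw [hv']
          _ = v' := by rw [IsIso.inv_hom_id_assoc]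
      · intro w
        refine ⟨inv u ≫ w, ?_⟩
        show u ≫ inv u ≫ w = w
        rw [IsIso.hom_inv_id_assoc]
    have hcomp : (E₁.conn K).comp (precompₗ K u) = E₂.conn K :=
      LinearMap.ext fun v => (hconn v).symm
    refine ⟨hadd₂, ?_, ?_⟩
    · rw [← hcomp, LinearMap.range_comp, LinearMap.range_eq_top.2 hφ.2, Submodule.map_top,
        hrange₁]
    · intro g hg
      set φe : (K₂ ⟶ K) ≃ₗ[End K] (K₁ ⟶ K) := LinearEquiv.ofBijective (precompₗ K u) hφ
        with hφe
      set h : (K₁ ⟶ K) →ₗ[End K] (K₁ ⟶ K) :=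
        (precompₗ K u) ∘ₗ g ∘ₗ (φe.symm : (K₁ ⟶ K) →ₗ[End K] (K₂ ⟶ K)) with hh
      have hch : (E₁.conn K).comp h = E₁.conn K := by
        refine LinearMap.ext fun w => ?_
        have s1 : E₁.conn K (h w) = E₂.conn K (g (φe.symm w)) := by
          simp only [hh, LinearMap.comp_apply, LinearEquiv.coe_coe, precompₗ_apply]
          exact (hconn (g (φe.symm w))).symm
        have s2 : E₂.conn K (g (φe.symm w)) = E₂.conn K (φe.symm w) :=
          LinearMap.congr_fun hg (φe.symm w)
        have s3 : E₂.conn K (φe.symm w) = E₁.conn K (u ≫ φe.symm w) := hconn _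
        have s4 : u ≫ φe.symm w = w := by
          have := φe.apply_symm_apply w
          rw [hφe] at this
          simpa only [LinearEquiv.ofBijective_apply, precompₗ_apply] using this
        show E₁.conn K (h w) = E₁.conn K w
        rw [s1, s2, s3, s4]
      have hbij := hmin₁ h hch
      have hg' : ⇑g = ⇑φe.symm ∘ ⇑h ∘ ⇑φe := by
        funext v
        have h1 : h (φe v) = φe (g v) := by
          simp only [hh, LinearMap.comp_apply, LinearEquiv.coe_coe,
            LinearEquiv.symm_apply_apply, hφe, LinearEquiv.ofBijective_apply]
          exact congrArg (precompₗ K u) (congrArg g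
            ((LinearEquiv.ofBijective (precompₗ K u) hφ).symm_apply_apply v))
        simp only [Function.comp_apply, h1, LinearEquiv.symm_apply_apply]
      rw [hg']
      exact φe.symm.bijective.comp (hbij.comp φe.bijective)
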